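/- For any nonzero complex m and real r, lim over pairwise-distinct triples (m_1, m_2, m_3) → (m, m, m) of ∑_{j=1}^3 exp(-r m_j) ∏_{k≠j} m_k²/(m_k² - m_j²) equals exp(-m r)·(1 + (5/8) m r + (1/8) m² r²). -/

import Mathlib

open Finset Filter Topology

namespace DegTriple

open Metric Complex

noncomputable def gg (r : ℝ) (f : Fin 3 → ℂ) (z : ℂ) : ℂ :=
  2 * Complex.exp (-(r : ℂ) * z) * (f 0 ^ 2 * f 1 ^ 2 * f 2 ^ 2) /
    (z * (z + f 0) * (z + f 1) * (z + f 2))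

noncomputable def Phi (r : ℝ) (f : Fin 3 → ℂ) (z : ℂ) : ℂ :=
  gg r f z / ((z - f 0) * (z - f 1) * (z - f 2))

noncomputable def Rad (m : ℂ) : ℝ := ‖m‖ / 2

variable {m : ℂ}

lemma Rad_pos (hm : m ≠ 0) : 0 < Rad m := by
  simp [Rad, norm_pos_iff.mpr hm]

lemma ne_zero_of_closedBall (hm : m ≠ 0) {z : ℂ} (hz : z ∈ closedBall m (Rad m)) : z ≠ 0 := by
  intro h
  subst h
  rw [mem_closedBall, Complex.dist_eq, zero_sub, norm_neg, Rad] at hz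
  have := norm_pos_iff.mpr hm
  linarith

lemma add_ne_zero_of_near (hm : m ≠ 0) {z a : ℂ} (hz : z ∈ closedBall m (Rad m))
    (ha : dist a m ≤ Rad m / 2) : z + a ≠ 0 := by
  intro h
  rw [mem_closedBall, Complex.dist_eq] at hz
  rw [Complex.dist_eq] at ha
  have key : (z - m) + (a - m) = -(2 * m) := by
    have : z + a = 0 := h
    linear_combination this
  have h1 : ‖(-(2 * m))‖ ≤ ‖(z - m)‖ + ‖(a - m)‖ := by
    rw [← key]; exact norm_add_le _ _
  rw [norm_neg, norm_mul] at h1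
  simp only [Complex.norm_two] at h1
  have := norm_pos_iff.mpr hm
  rw [Rad] at hz ha
  linarith

lemma sub_ne_zero_of_sphere (hm : m ≠ 0) {z a : ℂ} (hz : z ∈ sphere m (Rad m))
    (ha : dist a m ≤ Rad m / 2) : z - a ≠ 0 := by
  intro h
  rw [mem_sphere, Complex.dist_eq] at hz
  rw [Complex.dist_eq] at ha
  have : z = a := by linear_combination h
  rw [this] at hz
  rw [hz] at ha
  have := Rad_pos hm
  linarith

lemma near_ne_zero (hm : m ≠ 0) {a : ℂ} (ha : dist a m ≤ Rad m / 2) : a ≠ 0 := by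
  intro h
  subst h
  rw [Complex.dist_eq, zero_sub, norm_neg, Rad] at ha
  have := norm_pos_iff.mpr hm
  linarith

lemma circleIntegral_add' {f g : ℂ → ℂ} {c : ℂ} {R : ℝ} (hf : CircleIntegrable f c R)
    (hg : CircleIntegrable g c R) :
    (∮ z in C(c, R), (f z + g z)) = (∮ z in C(c, R), f z) + ∮ z in C(c, R), g z := by
  simp only [circleIntegral, smul_add, intervalIntegral.integral_add hf.out hg.out]

lemma kern3 {x a b c : ℂ} (hab : a - b ≠ 0) (hac : a - c ≠ 0) (hbc : b - c ≠ 0)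
    (hxa : x - a ≠ 0) (hxb : x - b ≠ 0) (hxc : x - c ≠ 0) :
    ((x - a) * ((x - b) * (x - c)))⁻¹
      = ((a - b) * (a - c))⁻¹ * (x - a)⁻¹ + ((b - a) * (b - c))⁻¹ * (x - b)⁻¹
        + ((c - a) * (c - b))⁻¹ * (x - c)⁻¹ := by
  have hba : b - a ≠ 0 := fun h => hab (by linear_combination -h)
  have hca : c - a ≠ 0 := fun h => hac (by linear_combination -h)
  have hcb : c - b ≠ 0 := fun h => hbc (by linear_combination -h)
  have h1 : (a - b) * (a - c) * (x - a) ≠ 0 := mul_ne_zero (mul_ne_zero hab hac) hxa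
  have h2 : (b - a) * (b - c) * (x - b) ≠ 0 := mul_ne_zero (mul_ne_zero hba hbc) hxb
  have h3 : (c - a) * (c - b) * (x - c) ≠ 0 := mul_ne_zero (mul_ne_zero hca hcb) hxc
  have hL : (x - a) * ((x - b) * (x - c)) ≠ 0 := mul_ne_zero hxa (mul_ne_zero hxb hxc)
  rw [← mul_inv, ← mul_inv, ← mul_inv]
  rw [inv_eq_one_div, inv_eq_one_div, inv_eq_one_div, inv_eq_one_div]
  rw [div_add_div _ _ h1 h2, div_add_div _ _ (mul_ne_zero h1 h2) h3,
    div_eq_div_iff hL (mul_ne_zero (mul_ne_zero h1 h2) h3)]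
  ring

lemma resid0 {r' x y z : ℂ} (hx : x ≠ 0) (hxy : x - y ≠ 0) (hxz : x - z ≠ 0)
    (haxx : x + x ≠ 0) (haxy : x + y ≠ 0) (haxz : x + z ≠ 0)
    (hsy : y ^ 2 - x ^ 2 ≠ 0) (hsz : z ^ 2 - x ^ 2 ≠ 0) :
    ((x - y) * (x - z))⁻¹ *
        (2 * Complex.exp (-r' * x) * (x ^ 2 * y ^ 2 * z ^ 2) / (x * (x + x) * (x + y) * (x + z)))
      = Complex.exp (-r' * x) * (y ^ 2 / (y ^ 2 - x ^ 2) * (z ^ 2 / (z ^ 2 - x ^ 2))) := by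
  rw [inv_mul_eq_div, div_div, div_mul_div_comm, mul_div_assoc',
    div_eq_div_iff (by exact mul_ne_zero (mul_ne_zero (mul_ne_zero (mul_ne_zero hx haxx) haxy) haxz) (mul_ne_zero hxy hxz)) (by exact mul_ne_zero hsy hsz)]
  ring

lemma resid1 {r' x y z : ℂ} (hy : y ≠ 0) (hyx : y - x ≠ 0) (hyz : y - z ≠ 0)
    (hayy : y + y ≠ 0) (hayx : y + x ≠ 0) (hayz : y + z ≠ 0)
    (hsx : x ^ 2 - y ^ 2 ≠ 0) (hsz : z ^ 2 - y ^ 2 ≠ 0) :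
    ((y - x) * (y - z))⁻¹ *
        (2 * Complex.exp (-r' * y) * (x ^ 2 * y ^ 2 * z ^ 2) / (y * (y + x) * (y + y) * (y + z)))
      = Complex.exp (-r' * y) * (x ^ 2 / (x ^ 2 - y ^ 2) * (z ^ 2 / (z ^ 2 - y ^ 2))) := by
  rw [inv_mul_eq_div, div_div, div_mul_div_comm, mul_div_assoc',
    div_eq_div_iff (by exact mul_ne_zero (mul_ne_zero (mul_ne_zero (mul_ne_zero hy hayx) hayy) hayz) (mul_ne_zero hyx hyz)) (by exact mul_ne_zero hsx hsz)]
  ring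

lemma resid2 {r' x y z : ℂ} (hz : z ≠ 0) (hzx : z - x ≠ 0) (hzy : z - y ≠ 0)
    (hazz : z + z ≠ 0) (hazx : z + x ≠ 0) (hazy : z + y ≠ 0)
    (hsx : x ^ 2 - z ^ 2 ≠ 0) (hsy : y ^ 2 - z ^ 2 ≠ 0) :
    ((z - x) * (z - y))⁻¹ *
        (2 * Complex.exp (-r' * z) * (x ^ 2 * y ^ 2 * z ^ 2) / (z * (z + x) * (z + y) * (z + z)))
      = Complex.exp (-r' * z) * (x ^ 2 / (x ^ 2 - z ^ 2) * (y ^ 2 / (y ^ 2 - z ^ 2))) := by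
  rw [inv_mul_eq_div, div_div, div_mul_div_comm, mul_div_assoc',
    div_eq_div_iff (by exact mul_ne_zero (mul_ne_zero (mul_ne_zero (mul_ne_zero hz hazx) hazy) hazz) (mul_ne_zero hzx hzy)) (by exact mul_ne_zero hsx hsy)]
  ring

set_option maxHeartbeats 1000000 in
lemma lemB (hm : m ≠ 0) (r : ℝ) (f : Fin 3 → ℂ)
    (hinj : Function.Injective fun i => f i ^ 2)
    (hnear : ∀ i, dist (f i) m ≤ Rad m / 2) :
    (∑ j, Complex.exp (-(r : ℂ) * f j) * ∏ k ∈ univ.erase j, f k ^ 2 / (f k ^ 2 - f j ^ 2))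
      = (2 * Real.pi * Complex.I)⁻¹ * ∮ z in C(m, Rad m), Phi r f z := by
  have hR := Rad_pos hm
  have hf0 : ∀ i, f i ≠ 0 := fun i => near_ne_zero hm (hnear i)
  have hsq : ∀ i j : Fin 3, i ≠ j → f i ^ 2 - f j ^ 2 ≠ 0 := fun i j h =>
    sub_ne_zero.2 (Function.Injective.ne hinj h)
  have hne : ∀ i j : Fin 3, i ≠ j → f i - f j ≠ 0 := fun i j h =>
    sub_ne_zero.2 (fun he => h (hinj (by simp only [he])))
  have hcb : ∀ i, f i ∈ closedBall m (Rad m) :=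
    fun i => mem_closedBall.2 (le_trans (hnear i) (by linarith))
  have hball : ∀ i, f i ∈ ball m (Rad m) :=
    fun i => mem_ball.2 (lt_of_le_of_lt (hnear i) (by linarith))
  have hadd : ∀ i j : Fin 3, f i + f j ≠ 0 :=
    fun i j => add_ne_zero_of_near hm (hcb i) (hnear j)
  have hgdiff : DifferentiableOn ℂ (gg r f) (closedBall m (Rad m)) := by
    apply DifferentiableOn.div
    · apply Differentiable.differentiableOn
      fun_prop
    · apply Differentiable.differentiableOn
      fun_prop
    · intro z hz
      exact mul_ne_zero (mul_ne_zero (mul_ne_zero (ne_zero_of_closedBall hm hz)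
        (add_ne_zero_of_near hm hz (hnear 0))) (add_ne_zero_of_near hm hz (hnear 1)))
        (add_ne_zero_of_near hm hz (hnear 2))
  have hgcont : ContinuousOn (gg r f) (sphere m (Rad m)) :=
    hgdiff.continuousOn.mono sphere_subset_closedBall
  have cauchy : ∀ j : Fin 3, (∮ z in C(m, Rad m), (z - f j)⁻¹ • gg r f z)
      = (2 * Real.pi * Complex.I) • gg r f (f j) :=
    fun j => hgdiff.circleIntegral_sub_inv_smul (hball j)
  have hsub : ∀ (j : Fin 3), ∀ z ∈ sphere m (Rad m), z - f j ≠ 0 :=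
    fun j z hz => sub_ne_zero_of_sphere hm hz (hnear j)
  have hcon : ∀ j : Fin 3, ∀ bb : ℂ,
      ContinuousOn (fun z => bb • ((z - f j)⁻¹ • gg r f z)) (sphere m (Rad m)) := by
    intro j bb
    exact (continuousOn_const (c := bb)).smul
      (((continuousOn_id.sub continuousOn_const).inv₀ (hsub j)).smul hgcont)
  have hInt : ∀ j : Fin 3, ∀ bb : ℂ,
      CircleIntegrable (fun z => bb • ((z - f j)⁻¹ • gg r f z)) m (Rad m) :=
    fun j bb => (hcon j bb).circleIntegrable hR.le
  have key : Set.EqOn (Phi r f)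
      (fun z => ((f 0 - f 1) * (f 0 - f 2))⁻¹ • ((z - f 0)⁻¹ • gg r f z)
        + ((f 1 - f 0) * (f 1 - f 2))⁻¹ • ((z - f 1)⁻¹ • gg r f z)
        + ((f 2 - f 0) * (f 2 - f 1))⁻¹ • ((z - f 2)⁻¹ • gg r f z)) (sphere m (Rad m)) := by
    intro z hz
    have kern := kern3 (x := z) (hne 0 1 (by decide)) (hne 0 2 (by decide)) (hne 1 2 (by decide))
      (hsub 0 z hz) (hsub 1 z hz) (hsub 2 z hz)
    show Phi r f z = _
    rw [Phi, div_eq_mul_inv,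
      show (z - f 0) * (z - f 1) * (z - f 2) = (z - f 0) * ((z - f 1) * (z - f 2)) from by ring,
      kern]
    simp only [smul_eq_mul]
    ring
  have expand : (∮ z in C(m, Rad m), Phi r f z)
      = ((f 0 - f 1) * (f 0 - f 2))⁻¹ • ((2 * Real.pi * Complex.I) • gg r f (f 0))
        + ((f 1 - f 0) * (f 1 - f 2))⁻¹ • ((2 * Real.pi * Complex.I) • gg r f (f 1))
        + ((f 2 - f 0) * (f 2 - f 1))⁻¹ • ((2 * Real.pi * Complex.I) • gg r f (f 2)) := by
    rw [circleIntegral.integral_congr hR.le key,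
      circleIntegral_add' (f := fun z => ((f 0 - f 1) * (f 0 - f 2))⁻¹ • ((z - f 0)⁻¹ • gg r f z)
          + ((f 1 - f 0) * (f 1 - f 2))⁻¹ • ((z - f 1)⁻¹ • gg r f z)) (ContinuousOn.circleIntegrable hR.le ((hcon 0 _).add (hcon 1 _))) (hInt 2 _),
      circleIntegral_add' (hInt 0 _) (hInt 1 _),
      circleIntegral.integral_smul, circleIntegral.integral_smul, circleIntegral.integral_smul,
      cauchy 0, cauchy 1, cauchy 2]
  rw [expand]
  have hpi : (2 * (Real.pi : ℂ) * Complex.I) ≠ 0 := Complex.two_pi_I_ne_zero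
  simp only [smul_eq_mul]
  rw [show ∀ B0 B1 B2 G0 G1 G2 P : ℂ, B0 * (P * G0) + B1 * (P * G1) + B2 * (P * G2)
      = P * (B0 * G0 + B1 * G1 + B2 * G2) from fun _ _ _ _ _ _ _ => by ring,
    inv_mul_cancel_left₀ hpi]
  have r0 := resid0 (r' := (r : ℂ)) (x := f 0) (y := f 1) (z := f 2) (hf0 0)
    (hne 0 1 (by decide)) (hne 0 2 (by decide)) (hadd 0 0) (hadd 0 1) (hadd 0 2)
    (hsq 1 0 (by decide)) (hsq 2 0 (by decide))
  have r1 := resid1 (r' := (r : ℂ)) (x := f 0) (y := f 1) (z := f 2) (hf0 1)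
    (hne 1 0 (by decide)) (hne 1 2 (by decide)) (hadd 1 1) (hadd 1 0) (hadd 1 2)
    (hsq 0 1 (by decide)) (hsq 2 1 (by decide))
  have r2 := resid2 (r' := (r : ℂ)) (x := f 0) (y := f 1) (z := f 2) (hf0 2)
    (hne 2 0 (by decide)) (hne 2 1 (by decide)) (hadd 2 2) (hadd 2 0) (hadd 2 1)
    (hsq 0 2 (by decide)) (hsq 1 2 (by decide))
  rw [Fin.sum_univ_three]
  simp only [gg, show (univ.erase (0 : Fin 3)) = {1, 2} from by decide,
    show (univ.erase (1 : Fin 3)) = {0, 2} from by decide,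
    show (univ.erase (2 : Fin 3)) = {0, 1} from by decide,
    Finset.prod_pair (show (1 : Fin 3) ≠ 2 from by decide),
    Finset.prod_pair (show (0 : Fin 3) ≠ 2 from by decide),
    Finset.prod_pair (show (0 : Fin 3) ≠ 1 from by decide)]
  rw [r0, r1, r2]

set_option maxHeartbeats 1000000 in
lemma lemA (hm : m ≠ 0) (r : ℝ) :
    ContinuousAt (fun f : Fin 3 → ℂ => ∮ z in C(m, Rad m), Phi r f z) (fun _ => m) := by
  have hR := Rad_pos hm
  set D : Fin 3 → ℂ := fun _ => m with hD
  have hDist : ∀ f : Fin 3 → ℂ, f ∈ closedBall D (Rad m / 2) → ∀ j, dist (f j) m ≤ Rad m / 2 :=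
    fun f hf j => le_trans (dist_le_pi_dist f D j) (mem_closedBall.1 hf)
  have hsph : ∀ θ : ℝ, circleMap m (Rad m) θ ∈ sphere m (Rad m) := fun θ =>
    circleMap_mem_sphere _ hR.le _
  have hden1 : ∀ f : Fin 3 → ℂ, (∀ j, dist (f j) m ≤ Rad m / 2) → ∀ w ∈ sphere m (Rad m),
      w * (w + f 0) * (w + f 1) * (w + f 2) ≠ 0 := by
    intro f hf w hw
    have hw' : w ∈ closedBall m (Rad m) := sphere_subset_closedBall hw
    exact mul_ne_zero (mul_ne_zero (mul_ne_zero (ne_zero_of_closedBall hm hw')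
      (add_ne_zero_of_near hm hw' (hf 0))) (add_ne_zero_of_near hm hw' (hf 1)))
      (add_ne_zero_of_near hm hw' (hf 2))
  have hden2 : ∀ f : Fin 3 → ℂ, (∀ j, dist (f j) m ≤ Rad m / 2) → ∀ w ∈ sphere m (Rad m),
      (w - f 0) * (w - f 1) * (w - f 2) ≠ 0 := by
    intro f hf w hw
    exact mul_ne_zero (mul_ne_zero (sub_ne_zero_of_sphere hm hw (hf 0))
      (sub_ne_zero_of_sphere hm hw (hf 1))) (sub_ne_zero_of_sphere hm hw (hf 2))
  have hDmem : ∀ j : Fin 3, dist (D j) m ≤ Rad m / 2 := by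
    intro j
    simp only [hD, dist_self]
    positivity
  have hwcont : Continuous fun p : (Fin 3 → ℂ) × ℝ => circleMap m (Rad m) p.2 :=
    (continuous_circleMap _ _).comp continuous_snd
  have happ : ∀ j : Fin 3, Continuous fun p : (Fin 3 → ℂ) × ℝ => p.1 j := fun j =>
    (continuous_apply j).comp continuous_fst
  have hderivc : Continuous fun p : (Fin 3 → ℂ) × ℝ => deriv (circleMap m (Rad m)) p.2 := by
    simp only [deriv_circleMap]
    exact (((continuous_circleMap 0 _).comp continuous_snd).mul continuous_const)
  have hnum : Continuous fun p : (Fin 3 → ℂ) × ℝ =>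
      2 * Complex.exp (-(r : ℂ) * circleMap m (Rad m) p.2) *
        (p.1 0 ^ 2 * p.1 1 ^ 2 * p.1 2 ^ 2) := by
    apply Continuous.mul
    · exact continuous_const.mul (Complex.continuous_exp.comp (continuous_const.mul hwcont))
    · exact (((happ 0).pow 2).mul ((happ 1).pow 2)).mul ((happ 2).pow 2)
  have hd1 : Continuous fun p : (Fin 3 → ℂ) × ℝ => circleMap m (Rad m) p.2 *
      (circleMap m (Rad m) p.2 + p.1 0) * (circleMap m (Rad m) p.2 + p.1 1) *
      (circleMap m (Rad m) p.2 + p.1 2) :=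
    ((hwcont.mul (hwcont.add (happ 0))).mul (hwcont.add (happ 1))).mul (hwcont.add (happ 2))
  have hd2 : Continuous fun p : (Fin 3 → ℂ) × ℝ => (circleMap m (Rad m) p.2 - p.1 0) *
      (circleMap m (Rad m) p.2 - p.1 1) * (circleMap m (Rad m) p.2 - p.1 2) :=
    ((hwcont.sub (happ 0)).mul (hwcont.sub (happ 1))).mul (hwcont.sub (happ 2))
  set K : Set ((Fin 3 → ℂ) × ℝ) := closedBall D (Rad m / 2) ×ˢ Set.Icc 0 (2 * Real.pi) with hK
  have hKc : IsCompact K := (isCompact_closedBall _ _).prod isCompact_Icc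
  have hPsi : ContinuousOn (fun p : (Fin 3 → ℂ) × ℝ =>
      deriv (circleMap m (Rad m)) p.2 • Phi r p.1 (circleMap m (Rad m) p.2)) K := by
    apply ContinuousOn.smul hderivc.continuousOn
    simp only [Phi, gg]
    apply ContinuousOn.div
    · apply ContinuousOn.div hnum.continuousOn hd1.continuousOn
      intro p hp
      exact hden1 p.1 (hDist p.1 hp.1) _ (hsph p.2)
    · exact hd2.continuousOn
    · intro p hp
      exact hden2 p.1 (hDist p.1 hp.1) _ (hsph p.2)
  obtain ⟨C, hC⟩ := hKc.exists_bound_of_continuousOn hPsi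
  have hIoc : Set.uIoc (0 : ℝ) (2 * Real.pi) ⊆ Set.Icc 0 (2 * Real.pi) := by
    rw [Set.uIoc_of_le Real.two_pi_pos.le]
    exact Set.Ioc_subset_Icc_self
  simp only [circleIntegral]
  apply intervalIntegral.continuousAt_of_dominated_interval (bound := fun _ => C)
  · filter_upwards [closedBall_mem_nhds D (by positivity : (0 : ℝ) < Rad m / 2)] with f hf
    have hcomp : ContinuousOn (fun θ : ℝ =>
        deriv (circleMap m (Rad m)) θ • Phi r f (circleMap m (Rad m) θ))
        (Set.Icc 0 (2 * Real.pi)) :=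
      hPsi.comp ((Continuous.prodMk_right f).continuousOn) (fun θ hθ => ⟨hf, hθ⟩)
    exact (hcomp.mono hIoc).aestronglyMeasurable measurableSet_uIoc
  · filter_upwards [closedBall_mem_nhds D (by positivity : (0 : ℝ) < Rad m / 2)] with f hf
    refine Filter.Eventually.of_forall fun θ hθ => ?_
    exact hC (f, θ) ⟨hf, hIoc hθ⟩
  · exact intervalIntegrable_const
  · refine Filter.Eventually.of_forall fun θ _ => ?_
    refine ContinuousAt.smul (f := fun _ => deriv (circleMap m (Rad m)) θ)
      (g := fun x => Phi r x (circleMap m (Rad m) θ)) continuousAt_const ?_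
    simp only [Phi, gg]
    have hnumf : Continuous fun f : Fin 3 → ℂ =>
        2 * Complex.exp (-(r : ℂ) * circleMap m (Rad m) θ) * (f 0 ^ 2 * f 1 ^ 2 * f 2 ^ 2) := by
      exact continuous_const.mul
        ((((continuous_apply 0).pow 2).mul ((continuous_apply 1).pow 2)).mul
          ((continuous_apply 2).pow 2))
    have hd1f : Continuous fun f : Fin 3 → ℂ => circleMap m (Rad m) θ *
        (circleMap m (Rad m) θ + f 0) * (circleMap m (Rad m) θ + f 1) *
        (circleMap m (Rad m) θ + f 2) :=
      ((continuous_const.mul (continuous_const.add (continuous_apply 0))).mul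
        (continuous_const.add (continuous_apply 1))).mul (continuous_const.add (continuous_apply 2))
    have hd2f : Continuous fun f : Fin 3 → ℂ => (circleMap m (Rad m) θ - f 0) *
        (circleMap m (Rad m) θ - f 1) * (circleMap m (Rad m) θ - f 2) :=
      ((continuous_const.sub (continuous_apply 0)).mul
        (continuous_const.sub (continuous_apply 1))).mul (continuous_const.sub (continuous_apply 2))
    apply ContinuousAt.div
    · exact ContinuousAt.div hnumf.continuousAt hd1f.continuousAt
        (hden1 D hDmem _ (hsph θ))
    · exact hd2f.continuousAt
    · exact hden2 D hDmem _ (hsph θ)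

noncomputable def P0 (m : ℂ) (r : ℝ) (z : ℂ) : ℂ :=
  2 * m ^ 6 * Complex.exp (-(r : ℂ) * z) / (z * (z + m) ^ 3)

noncomputable def NN (m : ℂ) (r : ℝ) (z : ℂ) : ℂ := -(r : ℂ) * z * (z + m) - 4 * z - m

noncomputable def P1 (m : ℂ) (r : ℝ) (z : ℂ) : ℂ :=
  2 * m ^ 6 * Complex.exp (-(r : ℂ) * z) * NN m r z / (z ^ 2 * (z + m) ^ 4)

noncomputable def MM (m : ℂ) (r : ℝ) (z : ℂ) : ℂ :=
  (-(r : ℂ) * NN m r z + (-(r : ℂ) * (2 * z + m) - 4)) * (z * (z + m)) - NN m r z * (6 * z + 2 * m)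

noncomputable def P2 (m : ℂ) (r : ℝ) (z : ℂ) : ℂ :=
  2 * m ^ 6 * Complex.exp (-(r : ℂ) * z) * MM m r z / (z ^ 3 * (z + m) ^ 5)

set_option maxHeartbeats 3200000 in
lemma lemC (hm : m ≠ 0) (r : ℝ) :
    (∮ z in C(m, Rad m), Phi r (fun _ => m) z)
      = 2 * Real.pi * Complex.I *
        (Complex.exp (-m * r) * (1 + 5 / 8 * m * r + 1 / 8 * m ^ 2 * r ^ 2)) := by
  have hR := Rad_pos hm
  have hmm : dist m m ≤ Rad m / 2 := by simp [dist_self]; positivity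
  have hfacts : ∀ z ∈ sphere m (Rad m), z ≠ 0 ∧ z + m ≠ 0 ∧ z - m ≠ 0 := by
    intro z hz
    exact ⟨ne_zero_of_closedBall hm (sphere_subset_closedBall hz),
      add_ne_zero_of_near hm (sphere_subset_closedBall hz) hmm,
      sub_ne_zero_of_sphere hm hz hmm⟩
  -- continuity facts
  have hexp : Continuous fun z : ℂ => 2 * m ^ 6 * Complex.exp (-(r : ℂ) * z) :=
    continuous_const.mul (Complex.continuous_exp.comp (continuous_const.mul continuous_id))
  have hNN : Continuous (NN m r) := by
    unfold NN
    fun_prop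
  have hMM : Continuous (MM m r) := by
    unfold MM NN
    fun_prop
  have hc0 : ContinuousOn (fun z => P0 m r z / (z - m) ^ 3) (sphere m (Rad m)) := by
    simp only [P0]
    apply ContinuousOn.div
    · exact ContinuousOn.div hexp.continuousOn (by fun_prop)
        (fun z hz => mul_ne_zero (hfacts z hz).1 (pow_ne_zero 3 (hfacts z hz).2.1))
    · fun_prop
    · exact fun z hz => pow_ne_zero 3 (hfacts z hz).2.2
  have hc1 : ContinuousOn (fun z => 2⁻¹ * P1 m r z / (z - m) ^ 2) (sphere m (Rad m)) := by
    simp only [P1]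
    apply ContinuousOn.div
    · apply ContinuousOn.mul continuousOn_const
      exact ContinuousOn.div (hexp.mul hNN).continuousOn (by fun_prop)
        (fun z hz => mul_ne_zero (pow_ne_zero 2 (hfacts z hz).1) (pow_ne_zero 4 (hfacts z hz).2.1))
    · fun_prop
    · exact fun z hz => pow_ne_zero 2 (hfacts z hz).2.2
  have hc2 : ContinuousOn (fun z => 2⁻¹ * P2 m r z / (z - m)) (sphere m (Rad m)) := by
    simp only [P2]
    apply ContinuousOn.div
    · apply ContinuousOn.mul continuousOn_const
      exact ContinuousOn.div (hexp.mul hMM).continuousOn (by fun_prop)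
        (fun z hz => mul_ne_zero (pow_ne_zero 3 (hfacts z hz).1) (pow_ne_zero 5 (hfacts z hz).2.1))
    · fun_prop
    · exact fun z hz => (hfacts z hz).2.2
  have int0 := hc0.circleIntegrable hR.le
  have int1 := hc1.circleIntegrable hR.le
  have int2 := hc2.circleIntegrable hR.le
  -- step 1 : congruence
  have step1 : (∮ z in C(m, Rad m), Phi r (fun _ => m) z)
      = ∮ z in C(m, Rad m), P0 m r z / (z - m) ^ 3 := by
    apply circleIntegral.integral_congr hR.le
    intro z hz
    simp only [Phi, gg, P0]
    rw [show (2 : ℂ) * Complex.exp (-(r : ℂ) * z) * (m ^ 2 * m ^ 2 * m ^ 2)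
        = 2 * m ^ 6 * Complex.exp (-(r : ℂ) * z) from by ring,
      show z * (z + m) * (z + m) * (z + m) = z * (z + m) ^ 3 from by ring,
      show (z - m) * (z - m) * (z - m) = (z - m) ^ 3 from by ring]
  -- step 2 : first integration by parts
  have hder1 : ∀ z ∈ sphere m (Rad m),
      HasDerivAt (fun w => -m ^ 6 * Complex.exp (-(r : ℂ) * w) / (w * (w + m) ^ 3 * (w - m) ^ 2))
        (P0 m r z / (z - m) ^ 3 - 2⁻¹ * P1 m r z / (z - m) ^ 2) z := by
    intro z hz
    obtain ⟨hz0, hza, hzs⟩ := hfacts z hz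
    have hlin : HasDerivAt (fun w : ℂ => -(r : ℂ) * w) (-(r : ℂ)) z := by
      simpa using (hasDerivAt_id z).const_mul (-(r : ℂ))
    have hu : HasDerivAt (fun w : ℂ => -m ^ 6 * Complex.exp (-(r : ℂ) * w))
        (-m ^ 6 * (Complex.exp (-(r : ℂ) * z) * -(r : ℂ))) z := hlin.cexp.const_mul (-m ^ 6)
    have hv : HasDerivAt (fun w : ℂ => w * (w + m) ^ 3 * (w - m) ^ 2)
        ((1 * (z + m) ^ 3 + z * (3 * (z + m) ^ 2 * 1)) * (z - m) ^ 2
          + z * (z + m) ^ 3 * (2 * (z - m) ^ 1 * 1)) z :=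
      ((hasDerivAt_id z).mul (((hasDerivAt_id z).add_const m).pow 3)).mul
        (((hasDerivAt_id z).sub_const m).pow 2)
    have hvne : z * (z + m) ^ 3 * (z - m) ^ 2 ≠ 0 :=
      mul_ne_zero (mul_ne_zero hz0 (pow_ne_zero 3 hza)) (pow_ne_zero 2 hzs)
    have hdiv := hu.div hv hvne
    refine hdiv.congr_deriv (Eq.symm ?_)
    have e1 : P0 m r z / (z - m) ^ 3
        = (2 * m ^ 6 * Complex.exp (-(r : ℂ) * z)) / (z * (z + m) ^ 3 * ((z - m) ^ 3)) := by
      rw [P0, div_div]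
    have e2 : 2⁻¹ * P1 m r z / (z - m) ^ 2
        = (m ^ 6 * Complex.exp (-(r : ℂ) * z) * NN m r z)
          / (z ^ 2 * (z + m) ^ 4 * ((z - m) ^ 2)) := by
      rw [P1, mul_div_assoc', div_div,
        show (2 : ℂ)⁻¹ * (2 * m ^ 6 * Complex.exp (-(r : ℂ) * z) * NN m r z)
          = m ^ 6 * Complex.exp (-(r : ℂ) * z) * NN m r z from by ring]
    have hA : z * (z + m) ^ 3 * ((z - m) ^ 3) ≠ 0 :=
      mul_ne_zero (mul_ne_zero hz0 (pow_ne_zero 3 hza)) (pow_ne_zero 3 hzs)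
    have hB : z ^ 2 * (z + m) ^ 4 * ((z - m) ^ 2) ≠ 0 :=
      mul_ne_zero (mul_ne_zero (pow_ne_zero 2 hz0) (pow_ne_zero 4 hza)) (pow_ne_zero 2 hzs)
    rw [e1, e2, div_sub_div _ _ hA hB, div_eq_div_iff (mul_ne_zero hA hB) (pow_ne_zero 2 hvne)]
    simp only [NN, id_eq]
    ring
  have ibp1 : (∮ z in C(m, Rad m),
      (P0 m r z / (z - m) ^ 3 - 2⁻¹ * P1 m r z / (z - m) ^ 2)) = 0 :=
    circleIntegral.integral_eq_zero_of_hasDerivWithinAt hR.le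
      (fun z hz => (hder1 z hz).hasDerivWithinAt)
  have step2 : (∮ z in C(m, Rad m), P0 m r z / (z - m) ^ 3)
      = ∮ z in C(m, Rad m), 2⁻¹ * P1 m r z / (z - m) ^ 2 := by
    rw [circleIntegral.integral_sub int0 int1] at ibp1
    exact sub_eq_zero.1 ibp1
  -- step 3 : second integration by parts
  have hder2 : ∀ z ∈ sphere m (Rad m),
      HasDerivAt (fun w => -m ^ 6 * Complex.exp (-(r : ℂ) * w) * NN m r w
          / (w ^ 2 * (w + m) ^ 4 * (w - m)))
        (2⁻¹ * P1 m r z / (z - m) ^ 2 - 2⁻¹ * P2 m r z / (z - m)) z := by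
    intro z hz
    obtain ⟨hz0, hza, hzs⟩ := hfacts z hz
    have hlin : HasDerivAt (fun w : ℂ => -(r : ℂ) * w) (-(r : ℂ)) z := by
      simpa using (hasDerivAt_id z).const_mul (-(r : ℂ))
    have he : HasDerivAt (fun w : ℂ => -m ^ 6 * Complex.exp (-(r : ℂ) * w))
        (-m ^ 6 * (Complex.exp (-(r : ℂ) * z) * -(r : ℂ))) z := hlin.cexp.const_mul (-m ^ 6)
    have hNd : HasDerivAt (NN m r)
        (-(r : ℂ) * 1 * (z + m) + -(r : ℂ) * z * 1 - 4 * 1 - 0) z := by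
      unfold NN
      exact ((((hasDerivAt_id z).const_mul (-(r : ℂ))).mul
        ((hasDerivAt_id z).add_const m)).sub ((hasDerivAt_id z).const_mul 4)).sub
        (hasDerivAt_const z m)
    have hv : HasDerivAt (fun w : ℂ => w ^ 2 * (w + m) ^ 4 * (w - m))
        ((2 * z ^ 1 * 1 * (z + m) ^ 4 + z ^ 2 * (4 * (z + m) ^ 3 * 1)) * (z - m)
          + z ^ 2 * (z + m) ^ 4 * 1) z :=
      (((hasDerivAt_id z).pow 2).mul (((hasDerivAt_id z).add_const m).pow 4)).mul
        ((hasDerivAt_id z).sub_const m)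
    have hvne : z ^ 2 * (z + m) ^ 4 * (z - m) ≠ 0 :=
      mul_ne_zero (mul_ne_zero (pow_ne_zero 2 hz0) (pow_ne_zero 4 hza)) hzs
    have hdiv := (he.mul hNd).div hv hvne
    refine hdiv.congr_deriv (Eq.symm ?_)
    have e2 : 2⁻¹ * P1 m r z / (z - m) ^ 2
        = (m ^ 6 * Complex.exp (-(r : ℂ) * z) * NN m r z)
          / (z ^ 2 * (z + m) ^ 4 * ((z - m) ^ 2)) := by
      rw [P1, mul_div_assoc', div_div,
        show (2 : ℂ)⁻¹ * (2 * m ^ 6 * Complex.exp (-(r : ℂ) * z) * NN m r z)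
          = m ^ 6 * Complex.exp (-(r : ℂ) * z) * NN m r z from by ring]
    have e4 : 2⁻¹ * P2 m r z / (z - m)
        = (m ^ 6 * Complex.exp (-(r : ℂ) * z) * MM m r z)
          / (z ^ 3 * (z + m) ^ 5 * (z - m)) := by
      rw [P2, mul_div_assoc', div_div,
        show (2 : ℂ)⁻¹ * (2 * m ^ 6 * Complex.exp (-(r : ℂ) * z) * MM m r z)
          = m ^ 6 * Complex.exp (-(r : ℂ) * z) * MM m r z from by ring]
    have hB : z ^ 2 * (z + m) ^ 4 * ((z - m) ^ 2) ≠ 0 :=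
      mul_ne_zero (mul_ne_zero (pow_ne_zero 2 hz0) (pow_ne_zero 4 hza)) (pow_ne_zero 2 hzs)
    have hC : z ^ 3 * (z + m) ^ 5 * (z - m) ≠ 0 :=
      mul_ne_zero (mul_ne_zero (pow_ne_zero 3 hz0) (pow_ne_zero 5 hza)) hzs
    rw [e2, e4, div_sub_div _ _ hB hC, div_eq_div_iff (mul_ne_zero hB hC) (pow_ne_zero 2 hvne)]
    simp only [NN, MM, id_eq, Pi.mul_apply]
    ring
  have ibp2 : (∮ z in C(m, Rad m),
      (2⁻¹ * P1 m r z / (z - m) ^ 2 - 2⁻¹ * P2 m r z / (z - m))) = 0 :=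
    circleIntegral.integral_eq_zero_of_hasDerivWithinAt hR.le
      (fun z hz => (hder2 z hz).hasDerivWithinAt)
  have step3 : (∮ z in C(m, Rad m), 2⁻¹ * P1 m r z / (z - m) ^ 2)
      = ∮ z in C(m, Rad m), 2⁻¹ * P2 m r z / (z - m) := by
    rw [circleIntegral.integral_sub int1 int2] at ibp2
    exact sub_eq_zero.1 ibp2
  -- step 4 : Cauchy integral formula
  have hdiffP2 : DifferentiableOn ℂ (fun z => 2⁻¹ * P2 m r z) (closedBall m (Rad m)) := by
    simp only [P2]
    apply DifferentiableOn.const_mul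
    apply DifferentiableOn.div
    · apply Differentiable.differentiableOn
      unfold MM NN
      fun_prop
    · apply Differentiable.differentiableOn
      fun_prop
    · intro z hz
      exact mul_ne_zero (pow_ne_zero 3 (ne_zero_of_closedBall hm hz))
        (pow_ne_zero 5 (add_ne_zero_of_near hm hz hmm))
  have step4 : (∮ z in C(m, Rad m), 2⁻¹ * P2 m r z / (z - m))
      = (2 * Real.pi * Complex.I) • (2⁻¹ * P2 m r m) := by
    rw [circleIntegral.integral_congr hR.le
      (show Set.EqOn (fun z => 2⁻¹ * P2 m r z / (z - m))
        (fun z => (z - m)⁻¹ • (2⁻¹ * P2 m r z)) (sphere m (Rad m)) from fun z _ => by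
          simp only [smul_eq_mul]
          ring)]
    exact hdiffP2.circleIntegral_sub_inv_smul (mem_ball_self hR)
  -- final evaluation
  have hval : 2⁻¹ * P2 m r m
      = Complex.exp (-m * r) * (1 + 5 / 8 * m * r + 1 / 8 * m ^ 2 * r ^ 2) := by
    rw [P2, show -(r : ℂ) * m = -m * (r : ℂ) from by ring,
      show m ^ 3 * (m + m) ^ 5 = 32 * m ^ 8 from by ring, mul_div_assoc',
      div_eq_iff (by exact mul_ne_zero (by norm_num) (pow_ne_zero 8 hm) :
        (32 : ℂ) * m ^ 8 ≠ 0)]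
    simp only [MM, NN]
    ring
  rw [step1, step2, step3, step4, hval, smul_eq_mul]

set_option maxHeartbeats 1000000 in
lemma final (hm : m ≠ 0) (r : ℝ) :
    Filter.Tendsto
      (fun f : Fin 3 → ℂ => ∑ j, Complex.exp (-(r : ℂ) * f j) *
          ∏ k ∈ univ.erase j, f k ^ 2 / (f k ^ 2 - f j ^ 2))
      (nhdsWithin (fun _ => m)
        {f : Fin 3 → ℂ | (∀ i, f i ≠ 0) ∧ Function.Injective fun i => f i ^ 2})
      (nhds (Complex.exp (-m * r) *
        (1 + 5 / 8 * m * r + 1 / 8 * m ^ 2 * r ^ 2))) := by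
  have hpi : (2 * (Real.pi : ℂ) * Complex.I) ≠ 0 := Complex.two_pi_I_ne_zero
  have hR := DegTriple.Rad_pos hm
  have hA := DegTriple.lemA hm r
  have hC := DegTriple.lemC hm r
  have hT : Tendsto (fun f : Fin 3 → ℂ =>
        (2 * Real.pi * Complex.I)⁻¹ * ∮ z in C(m, DegTriple.Rad m), DegTriple.Phi r f z)
      (𝓝[{f : Fin 3 → ℂ | (∀ i, f i ≠ 0) ∧ Function.Injective fun i => f i ^ 2}]
        (fun _ => m))
      (𝓝 (Complex.exp (-m * r) * (1 + 5 / 8 * m * r + 1 / 8 * m ^ 2 * r ^ 2))) := by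
    have h0 := (hA.tendsto.const_mul ((2 * Real.pi * Complex.I)⁻¹)).mono_left
      (nhdsWithin_le_nhds (s := {f : Fin 3 → ℂ | (∀ i, f i ≠ 0) ∧
        Function.Injective fun i => f i ^ 2}))
    have hval : (2 * Real.pi * Complex.I)⁻¹ *
        (∮ z in C(m, DegTriple.Rad m), DegTriple.Phi r (fun _ => m) z)
        = Complex.exp (-m * r) * (1 + 5 / 8 * m * r + 1 / 8 * m ^ 2 * r ^ 2) := by
      rw [hC, inv_mul_cancel_left₀ hpi]
    rw [← hval]
    exact h0
  apply hT.congr'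
  have hball : ∀ᶠ f in 𝓝[{f : Fin 3 → ℂ | (∀ i, f i ≠ 0) ∧
      Function.Injective fun i => f i ^ 2}] (fun _ => m),
      f ∈ Metric.closedBall (fun _ => m : Fin 3 → ℂ) (DegTriple.Rad m / 2) :=
    Filter.eventually_of_mem
      (nhdsWithin_le_nhds (Metric.closedBall_mem_nhds _ (half_pos hR))) (fun f hf => hf)
  filter_upwards [hball, eventually_mem_nhdsWithin] with f hf hfs
  have hd : ∀ j : Fin 3, dist (f j) m ≤ DegTriple.Rad m / 2 := by
    intro j
    have h1 : dist (f j) ((fun _ => m : Fin 3 → ℂ) j) ≤ dist f (fun _ => m : Fin 3 → ℂ) :=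
      dist_le_pi_dist f (fun _ => m : Fin 3 → ℂ) j
    exact le_trans h1 (Metric.mem_closedBall.1 hf)
  exact (DegTriple.lemB hm r f hfs.2 hd).symm

end DegTriple

open Finset Filter Topology

theorem degenerate_triple_limit (m : ℂ) (hm : m ≠ 0) (r : ℝ) :
    Tendsto
      (fun f : Fin 3 → ℂ => ∑ j, Complex.exp (-(r : ℂ) * f j) *
          ∏ k ∈ univ.erase j, f k ^ 2 / (f k ^ 2 - f j ^ 2))
      (𝓝[{f : Fin 3 → ℂ | (∀ i, f i ≠ 0) ∧ Function.Injective fun i => f i ^ 2}]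
        (fun _ => m))
      (𝓝 (Complex.exp (-m * r) *
        (1 + 5 / 8 * m * r + 1 / 8 * m ^ 2 * r ^ 2))) :=
  DegTriple.final hm r
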